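/- Let R > 0 and let C : ℕ × ℕ → ℂ satisfy C(n,m) = conj(C(m,n)) for all m, n, and assume that for every ρ with 0 < ρ < R the double series Σ_{m,n≥0} |C(m,n)| ρ^{m+n} converges. Define the Hermitian kernel K(w,z) = Σ_{m,n≥0} C(m,n) z^m conj(w)^n for complex w, z with |w| < R and |z| < R. Let κ be a nonnegative integer. Then K has exactly κ negative squares on the disk {z : |z| < R} if and only if for every r ≥ 0 the Hermitian (r+1)×(r+1) matrix (C(m,n))_{m,n=0}^r has at most κ negative eigenvalues, and it has exactly κ negative eigenvalues for all sufficiently large r. -/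

import Mathlib

open scoped Matrix ComplexConjugate

/-- The number of negative eigenvalues (with multiplicity) of a Hermitian complex
matrix; junk value `0` if the matrix is not Hermitian. -/
noncomputable def negEig {n : Type*} [Fintype n] [DecidableEq n]
    (A : Matrix n n ℂ) : ℕ :=
  if h : A.IsHermitian then Nat.card {i // h.eigenvalues i < 0} else 0

/-- The number of positive eigenvalues (with multiplicity) of a Hermitian complex
matrix; junk value `0` if the matrix is not Hermitian. -/
noncomputable def posEig {n : Type*} [Fintype n] [DecidableEq n]
    (A : Matrix n n ℂ) : ℕ :=
  if h : A.IsHermitian then Nat.card {i // 0 < h.eigenvalues i} else 0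

/-- The Schur kernel `K_S(w,z) = (1 - S(z) conj(S(w)))/(1 - z conj(w))`. -/
noncomputable def schurKer (S : ℂ → ℂ) (w z : ℂ) : ℂ :=
  (1 - S z * conj (S w)) / (1 - z * conj w)

/-- A Hermitian kernel `K` has exactly `κ` negative squares on `Ω`. -/
def HasNegSquares (Ω : Set ℂ) (K : ℂ → ℂ → ℂ) (κ : ℕ) : Prop :=
  (∀ (m : ℕ) (z : Fin m → ℂ), (∀ i, z i ∈ Ω) →
      negEig (Matrix.of fun i j => K (z j) (z i)) ≤ κ) ∧
  (∃ (m : ℕ) (z : Fin m → ℂ), (∀ i, z i ∈ Ω) ∧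
      negEig (Matrix.of fun i j => K (z j) (z i)) = κ)

/-- The `r×r` lower triangular Toeplitz matrix built from `a₀, a₁, …`. -/
def Tmat (a : ℕ → ℂ) (r : ℕ) : Matrix (Fin r) (Fin r) ℂ :=
  Matrix.of fun i j => if (j : ℕ) ≤ i then a ((i : ℕ) - j) else 0

/-- The `r×r` lower triangular Toeplitz matrix built from `conj a₀, conj a₁, …`. -/
def Ttil (a : ℕ → ℂ) (r : ℕ) : Matrix (Fin r) (Fin r) ℂ :=
  Matrix.of fun i j => if (j : ℕ) ≤ i then conj (a ((i : ℕ) - j)) else 0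

/-- The `r×r` Hankel matrix with entries `a_{i+j+1}`. -/
def Qmat (a : ℕ → ℂ) (r : ℕ) : Matrix (Fin r) (Fin r) ℂ :=
  Matrix.of fun i j => a ((i : ℕ) + j + 1)

/-- The `m×m` lower triangular Toeplitz matrix built from `c₀, c₁, …`. -/
def Bmat (c : ℕ → ℂ) (m : ℕ) : Matrix (Fin m) (Fin m) ℂ :=
  Matrix.of fun i j => if (j : ℕ) ≤ i then c ((i : ℕ) - j) else 0

/-- The `m×m` lower triangular Toeplitz matrix built from `conj c₀, conj c₁, …`. -/
def Btil (c : ℕ → ℂ) (m : ℕ) : Matrix (Fin m) (Fin m) ℂ :=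
  Matrix.of fun i j => if (j : ℕ) ≤ i then conj (c ((i : ℕ) - j)) else 0

/-- The `m×m` Hermitian Toeplitz matrix built from `c₀, c₁, …`
(`M_r` of the paper has size `r+1`, i.e. it is `Mmat c (r+1)`). -/
def Mmat (c : ℕ → ℂ) (m : ℕ) : Matrix (Fin m) (Fin m) ℂ :=
  Matrix.of fun i j =>
    if (j : ℕ) ≤ i then c ((i : ℕ) - j) else conj (c ((j : ℕ) - i))

/-- The `m×m` flip matrix, with ones on the antidiagonal. -/
def Jmat (m : ℕ) : Matrix (Fin m) (Fin m) ℂ :=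
  Matrix.of fun i j => if (i : ℕ) + j + 1 = m then 1 else 0

/-- Identification of `Fin m` with `Fin p ⊕ Fin q` when `m = p + q`. -/
def splitAt {p q m : ℕ} (h : m = p + q) : Fin m → Fin p ⊕ Fin q :=
  fun i =>
    if h' : (i : ℕ) < p then Sum.inl ⟨i, h'⟩
    else Sum.inr ⟨(i : ℕ) - p, by have := i.isLt; omega⟩

/-- The `m×m` block diagonal matrix `diag(A, D)` with `A` of size `p` and `D` of
size `q`, where `m = p + q`. -/
def dblock {p q m : ℕ} (h : m = p + q)
    (A : Matrix (Fin p) (Fin p) ℂ) (D : Matrix (Fin q) (Fin q) ℂ) :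
    Matrix (Fin m) (Fin m) ℂ :=
  (Matrix.fromBlocks A 0 0 D).submatrix (splitAt h) (splitAt h)

/-- The sequence `c` belongs to the class `P_ν`: `ν(M_r) = ν` for all
sufficiently large `r`. -/
def memP (c : ℕ → ℂ) (ν : ℕ) : Prop :=
  ∃ N, ∀ r ≥ N, negEig (Mmat c (r + 1)) = ν

/-- The sequence `c` belongs to the class `P_{ν,π}`: `ν(M_r) = ν` and
`π(M_r) = π` for all sufficiently large `r`. -/
def memPP (c : ℕ → ℂ) (ν π : ℕ) : Prop :=
  ∃ N, ∀ r ≥ N, negEig (Mmat c (r + 1)) = ν ∧ posEig (Mmat c (r + 1)) = π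

open Matrix Filter Topology

set_option linter.unusedSectionVars false
set_option maxHeartbeats 1000000

section Alg
variable {n : Type*} [Fintype n] [DecidableEq n] {A : Matrix n n ℂ}

/-- quadratic form -/
noncomputable def qf {n : Type*} [Fintype n] (A : Matrix n n ℂ) (x : n → ℂ) : ℝ :=
  (star x ⬝ᵥ A *ᵥ x).re

lemma dot_self_re (x : n → ℂ) : (star x ⬝ᵥ x).re = ∑ i, Complex.normSq (x i) := by
  simp only [dotProduct, Complex.re_sum, Pi.star_apply, RCLike.star_def]
  congr 1; ext i
  rw [Complex.conj_mul', ← Complex.ofReal_pow, Complex.ofReal_re,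
    Complex.sq_norm]

lemma dot_self_pos {x : n → ℂ} (hx : x ≠ 0) : 0 < (star x ⬝ᵥ x).re := by
  rw [dot_self_re]
  obtain ⟨i, hi⟩ : ∃ i, x i ≠ 0 := by
    by_contra h; push_neg at h; exact hx (funext h)
  exact Finset.sum_pos' (fun j _ => Complex.normSq_nonneg _)
    ⟨i, Finset.mem_univ i, Complex.normSq_pos.mpr hi⟩

lemma negEig_eq_card (hA : A.IsHermitian) :
    negEig A = Nat.card {i // hA.eigenvalues i < 0} := by
  rw [negEig, dif_pos hA]

/-- The y-coordinates of x. -/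
noncomputable def yc (hA : A.IsHermitian) (x : n → ℂ) : n → ℂ :=
  star (hA.eigenvectorUnitary : Matrix n n ℂ) *ᵥ x

lemma yc_mul (hA : A.IsHermitian) (x : n → ℂ) :
    (hA.eigenvectorUnitary : Matrix n n ℂ) *ᵥ yc hA x = x := by
  rw [yc, mulVec_mulVec, (mem_unitaryGroup_iff).mp hA.eigenvectorUnitary.2, one_mulVec]

lemma qf_eq (hA : A.IsHermitian) (x : n → ℂ) :
    qf A x = ∑ i, hA.eigenvalues i * Complex.normSq (yc hA x i) := by
  set U : Matrix n n ℂ := (hA.eigenvectorUnitary : Matrix n n ℂ) with hU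
  have h1 : star x ⬝ᵥ A *ᵥ x
      = star (yc hA x) ⬝ᵥ (diagonal (RCLike.ofReal ∘ hA.eigenvalues)) *ᵥ (yc hA x) := by
    conv_lhs => rw [hA.spectral_theorem, Unitary.conjStarAlgAut_apply]
    rw [← mulVec_mulVec, ← mulVec_mulVec, dotProduct_mulVec (star x) U]
    congr 1
    rw [yc, star_mulVec, star_eq_conjTranspose, conjTranspose_conjTranspose]
  rw [qf, h1]
  simp only [dotProduct, mulVec_diagonal, Complex.re_sum, Pi.star_apply, RCLike.star_def,
    Function.comp_apply]
  congr 1; ext i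
  have hco : (RCLike.ofReal (hA.eigenvalues i) : ℂ) = ((hA.eigenvalues i : ℝ) : ℂ) := rfl
  have h2 : (starRingEnd ℂ) (yc hA x i) * (((hA.eigenvalues i : ℝ) : ℂ) * yc hA x i)
      = ((hA.eigenvalues i : ℝ) : ℂ) * ((starRingEnd ℂ) (yc hA x i) * yc hA x i) := by ring
  rw [hco, h2, Complex.conj_mul', ← Complex.ofReal_pow, ← Complex.ofReal_mul,
    Complex.ofReal_re, Complex.sq_norm]

lemma norm_yc (hA : A.IsHermitian) (x : n → ℂ) :
    (star x ⬝ᵥ x).re = ∑ i, Complex.normSq (yc hA x i) := by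
  set U : Matrix n n ℂ := (hA.eigenvectorUnitary : Matrix n n ℂ) with hU
  have key : U * Uᴴ = 1 := by
    rw [← star_eq_conjTranspose]; exact (mem_unitaryGroup_iff).mp hA.eigenvectorUnitary.2
  have h1 : star (yc hA x) ⬝ᵥ (yc hA x) = star x ⬝ᵥ x := by
    rw [yc, star_mulVec, star_eq_conjTranspose, conjTranspose_conjTranspose,
      ← dotProduct_mulVec, mulVec_mulVec, key, one_mulVec]
  rw [← h1, dot_self_re]

/-- If a k-family is strictly negative for the form then k ≤ negEig. -/
lemma le_negEig (hA : A.IsHermitian) {k : ℕ} (v : Fin k → (n → ℂ))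
    (hneg : ∀ c : Fin k → ℂ, c ≠ 0 → qf A (∑ i, c i • v i) < 0) :
    k ≤ negEig A := by
  classical
  rw [negEig_eq_card hA, Nat.card_eq_fintype_card]
  set S := {i // hA.eigenvalues i < 0}
  -- linear map (Fin k → ℂ) → (S → ℂ)
  let L : (Fin k → ℂ) →ₗ[ℂ] (S → ℂ) :=
    (LinearMap.funLeft ℂ ℂ (Subtype.val : S → n)).comp
      ((mulVecLin (star (hA.eigenvectorUnitary : Matrix n n ℂ))).comp
        (Fintype.linearCombination ℂ v))
  have hinj : Function.Injective L := by
    rw [← LinearMap.ker_eq_bot, LinearMap.ker_eq_bot']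
    intro c hc
    by_contra hc0
    have hx : ∀ s : S, yc hA (∑ i, c i • v i) s.val = 0 := by
      intro s
      have := congrFun hc s
      exact this
    have : 0 ≤ qf A (∑ i, c i • v i) := by
      rw [qf_eq hA]
      apply Finset.sum_nonneg
      intro i _
      by_cases h : hA.eigenvalues i < 0
      · have := hx ⟨i, h⟩
        simp [this]
      · push_neg at h
        exact mul_nonneg h (Complex.normSq_nonneg _)
    exact absurd (hneg c hc0) (not_lt.mpr this)
  calc k = Module.finrank ℂ (Fin k → ℂ) := by simp
    _ ≤ Module.finrank ℂ (S → ℂ) := LinearMap.finrank_le_finrank_of_injective hinj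
    _ = Fintype.card S := by simp

end Alg

set_option linter.unusedSectionVars false

section Alg2
variable {n : Type*} [Fintype n] [DecidableEq n] {A : Matrix n n ℂ}

/-- Existence of a uniformly negative family spanning a `negEig A`-dimensional space. -/
lemma exists_neg_family (hA : A.IsHermitian) :
    ∃ (δ : ℝ) (v : Fin (negEig A) → (n → ℂ)), 0 < δ ∧
      (∀ c : Fin (negEig A) → ℂ,
        qf A (∑ i, c i • v i) ≤ -δ * (star (∑ i, c i • v i) ⬝ᵥ (∑ i, c i • v i)).re ∧
        ((∑ i, c i • v i) = 0 → c = 0)) := by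
  classical
  set U : Matrix n n ℂ := (hA.eigenvectorUnitary : Matrix n n ℂ) with hUdef
  have hsU : star U * U = 1 := (mem_unitaryGroup_iff').mp hA.eigenvectorUnitary.2
  have hcard : Fintype.card {i // hA.eigenvalues i < 0} = negEig A := by
    rw [negEig_eq_card hA, Nat.card_eq_fintype_card]
  obtain ⟨e⟩ : Nonempty (Fin (negEig A) ≃ {i // hA.eigenvalues i < 0}) :=
    ⟨(Fintype.equivFinOfCardEq hcard).symm⟩
  set ι : Fin (negEig A) → n := fun k => (e k).val with hι
  have hιinj : Function.Injective ι :=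
    Subtype.val_injective.comp e.injective
  set Fs : Finset ℝ :=
    insert 1 (Finset.univ.image fun i : n =>
      if hA.eigenvalues i < 0 then -hA.eigenvalues i else 1) with hFs
  have hFsne : Fs.Nonempty := ⟨1, Finset.mem_insert_self 1 _⟩
  have hFspos : ∀ a ∈ Fs, 0 < a := by
    intro a ha
    rcases Finset.mem_insert.mp ha with h | h
    · rw [h]; norm_num
    · obtain ⟨i, _, hi⟩ := Finset.mem_image.mp h
      by_cases hneg : hA.eigenvalues i < 0
      · rw [if_pos hneg] at hi; linarith [hi ▸ (neg_pos.mpr hneg)]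
      · rw [if_neg hneg] at hi; rw [← hi]; norm_num
  set δ : ℝ := Fs.min' hFsne with hδ
  have hδpos : 0 < δ := hFspos _ (Fs.min'_mem hFsne)
  have hδle : ∀ k : Fin (negEig A), hA.eigenvalues (ι k) ≤ -δ := by
    intro k
    have hmem : (-hA.eigenvalues (ι k)) ∈ Fs := by
      apply Finset.mem_insert_of_mem
      refine Finset.mem_image.mpr ⟨ι k, Finset.mem_univ _, ?_⟩
      rw [if_pos (e k).prop]
    have := Fs.min'_le _ hmem
    linarith
  set v : Fin (negEig A) → (n → ℂ) := fun k => U *ᵥ Pi.single (ι k) 1 with hv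
  refine ⟨δ, v, hδpos, fun c => ?_⟩
  set x : n → ℂ := ∑ i, c i • v i with hx
  have hyc : yc hA x = ∑ k, c k • (Pi.single (ι k) 1 : n → ℂ) := by
    have h0 : yc hA x = (mulVecLin (star U)) x := rfl
    rw [h0, hx, map_sum]
    congr 1; ext k i
    rw [_root_.map_smul]
    have : (mulVecLin (star U)) (v k) = Pi.single (ι k) 1 := by
      show star U *ᵥ (U *ᵥ Pi.single (ι k) 1) = Pi.single (ι k) 1
      rw [mulVec_mulVec, hsU, one_mulVec]
    rw [this]
  have hy : ∀ i : n, yc hA x i = ∑ k, if i = ι k then c k else 0 := by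
    intro i
    rw [hyc]
    rw [Finset.sum_apply]
    congr 1; ext k
    simp [Pi.single_apply]
  have hy2 : ∀ k, yc hA x (ι k) = c k := by
    intro k
    rw [hy]
    have : ∀ j, (if ι k = ι j then c j else 0) = if k = j then c j else 0 := by
      intro j; simp [hιinj.eq_iff]
    simp only [this]
    simp
  have hy3 : ∀ i, i ∉ Finset.univ.image ι → yc hA x i = 0 := by
    intro i hi
    rw [hy]
    apply Finset.sum_eq_zero
    intro k _
    rw [if_neg]
    intro hik
    exact hi (Finset.mem_image.mpr ⟨k, Finset.mem_univ _, hik.symm⟩)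
  constructor
  · have hq : qf A x = ∑ k, hA.eigenvalues (ι k) * Complex.normSq (c k) := by
      rw [qf_eq hA]
      rw [← Finset.sum_subset (Finset.subset_univ (Finset.univ.image ι))
        (fun i _ hi => by rw [hy3 i hi]; simp)]
      rw [Finset.sum_image (fun a _ b _ h => hιinj h)]
      congr 1; ext k
      rw [hy2]
    have hn : (star x ⬝ᵥ x).re = ∑ k, Complex.normSq (c k) := by
      rw [norm_yc hA]
      rw [← Finset.sum_subset (Finset.subset_univ (Finset.univ.image ι))
        (fun i _ hi => by rw [hy3 i hi]; simp)]
      rw [Finset.sum_image (fun a _ b _ h => hιinj h)]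
      congr 1; ext k
      rw [hy2]
    rw [hq, hn, Finset.mul_sum]
    apply Finset.sum_le_sum
    intro k _
    have := hδle k
    nlinarith [Complex.normSq_nonneg (c k)]
  · intro hx0
    ext k
    have h2 := hy2 k
    rw [hx0] at h2
    simp only [yc, mulVec_zero] at h2
    simp [← h2]

end Alg2

section Alg3
variable {n : Type*} [Fintype n] [DecidableEq n]
variable {m : Type*} [Fintype m] [DecidableEq m]

lemma qf_congr (A : Matrix n n ℂ) (B : Matrix n m ℂ) (x : m → ℂ) :
    qf (Bᴴ * A * B) x = qf A (B *ᵥ x) := by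
  rw [qf, qf]
  congr 1
  conv_rhs => rw [star_mulVec, mulVec_mulVec, ← dotProduct_mulVec, mulVec_mulVec,
    ← Matrix.mul_assoc]

lemma negEig_congr_le {A : Matrix n n ℂ} (hA : A.IsHermitian) (B : Matrix n m ℂ) :
    negEig (Bᴴ * A * B) ≤ negEig A := by
  have hA' : (Bᴴ * A * B).IsHermitian := isHermitian_conjTranspose_mul_mul B hA
  obtain ⟨δ, v, hδ, hvc⟩ := exists_neg_family hA'
  apply le_negEig hA (fun k => B *ᵥ v k)
  intro c hc
  have hsum : ∑ i, c i • (B *ᵥ v i) = B *ᵥ (∑ i, c i • v i) := by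
    rw [show B *ᵥ (∑ i, c i • v i) = (mulVecLin B) (∑ i, c i • v i) from rfl, map_sum]
    congr 1; ext i j
    rw [_root_.map_smul]
    rfl
  rw [hsum, ← qf_congr A B]
  obtain ⟨hle, hker⟩ := hvc c
  have hxne : (∑ i, c i • v i) ≠ 0 := fun h => hc (hker h)
  calc qf (Bᴴ * A * B) (∑ i, c i • v i)
      ≤ -δ * (star (∑ i, c i • v i) ⬝ᵥ (∑ i, c i • v i)).re := hle
    _ < 0 := by
        have := dot_self_pos hxne
        nlinarith

/-- perturbation bound for the quadratic form -/
lemma qf_perturb (M : Matrix n n ℂ) (x : n → ℂ) :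
    |qf M x| ≤ (∑ i, ∑ j, ‖M i j‖) * (star x ⬝ᵥ x).re := by
  have hT : ∀ i, ‖x i‖ ^ 2 ≤ (star x ⬝ᵥ x).re := by
    intro i
    rw [dot_self_re]
    calc ‖x i‖ ^ 2 = Complex.normSq (x i) := Complex.sq_norm _
      _ ≤ ∑ j, Complex.normSq (x j) :=
          Finset.single_le_sum (fun j _ => Complex.normSq_nonneg _) (Finset.mem_univ i)
  have h1 : |qf M x| ≤ ‖star x ⬝ᵥ M *ᵥ x‖ := by
    rw [qf]; exact Complex.abs_re_le_norm _
  refine h1.trans ?_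
  calc ‖star x ⬝ᵥ M *ᵥ x‖
      ≤ ∑ i, ‖(star x) i * (M *ᵥ x) i‖ := by
        rw [dotProduct]; exact norm_sum_le _ _
    _ ≤ ∑ i, ∑ j, ‖x i‖ * ‖M i j‖ * ‖x j‖ := by
        apply Finset.sum_le_sum
        intro i _
        rw [mulVec, dotProduct, Finset.mul_sum]
        refine (norm_sum_le _ _).trans ?_
        apply Finset.sum_le_sum
        intro j _
        simp only [Pi.star_apply, RCLike.star_def, norm_mul, Complex.norm_conj]
        exact le_of_eq (by ring)
    _ ≤ ∑ i, ∑ j, ‖M i j‖ * (star x ⬝ᵥ x).re := by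
        apply Finset.sum_le_sum; intro i _
        apply Finset.sum_le_sum; intro j _
        have hi := hT i
        have hj := hT j
        have hai : (0:ℝ) ≤ ‖x i‖ := norm_nonneg _
        have haj : (0:ℝ) ≤ ‖x j‖ := norm_nonneg _
        have hM : (0:ℝ) ≤ ‖M i j‖ := norm_nonneg _
        nlinarith [sq_nonneg (‖x i‖ - ‖x j‖)]
    _ = (∑ i, ∑ j, ‖M i j‖) * (star x ⬝ᵥ x).re := by
        rw [Finset.sum_mul]
        congr 1; ext i
        rw [Finset.sum_mul]

/-- lower semicontinuity of negEig along a filter -/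
lemma negEig_lsc {ι : Type*} {l : Filter ι} [l.NeBot] {A : ι → Matrix n n ℂ}
    {A₀ : Matrix n n ℂ} (h0 : A₀.IsHermitian) (hH : ∀ᶠ t in l, (A t).IsHermitian)
    (hconv : ∀ i j, Tendsto (fun t => A t i j) l (𝓝 (A₀ i j))) :
    ∀ᶠ t in l, negEig A₀ ≤ negEig (A t) := by
  obtain ⟨δ, v, hδ, hvc⟩ := exists_neg_family h0
  set N : ℝ := (Fintype.card n : ℝ)^2 + 1 with hN
  have hNpos : 0 < N := by positivity
  have hev : ∀ᶠ t in l, ∀ i j, ‖A t i j - A₀ i j‖ ≤ δ / (2 * N) := by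
    rw [eventually_all]
    intro i
    rw [eventually_all]
    intro j
    have := (hconv i j).sub_const (A₀ i j)
    rw [show A₀ i j - A₀ i j = 0 by ring] at this
    have h2 := this.norm
    rw [norm_zero] at h2
    have := h2.eventually_le_const (show (0:ℝ) < δ / (2*N) by positivity)
    filter_upwards [this] with t ht
    exact ht
  filter_upwards [hH, hev] with t hHt hevt
  apply le_negEig hHt v
  intro c hc
  obtain ⟨hle, hker⟩ := hvc c
  set x : n → ℂ := ∑ i, c i • v i with hx
  have hxne : x ≠ 0 := fun h => hc (hker h)
  have hpos := dot_self_pos hxne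
  have hsplit : qf (A t) x = qf A₀ x + qf (A t - A₀) x := by
    rw [qf, qf, qf, ← Complex.add_re]
    congr 1
    rw [Matrix.sub_mulVec, dotProduct_sub]
    ring
  rw [hsplit]
  have hpert : |qf (A t - A₀) x| ≤ (δ/2) * (star x ⬝ᵥ x).re := by
    refine (qf_perturb _ x).trans ?_
    apply mul_le_mul_of_nonneg_right _ hpos.le
    calc ∑ i, ∑ j, ‖(A t - A₀) i j‖
        ≤ ∑ (_ : n), ∑ (_ : n), δ / (2*N) := by
          apply Finset.sum_le_sum; intro i _
          apply Finset.sum_le_sum; intro j _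
          exact hevt i j
      _ = (Fintype.card n : ℝ)^2 * (δ / (2*N)) := by
          simp [Finset.sum_const, Finset.card_univ]
          ring
      _ ≤ δ/2 := by
          rw [hN, mul_div_assoc', div_le_div_iff₀ (by positivity) (by norm_num)]
          nlinarith [hδ.le, sq_nonneg ((Fintype.card n : ℝ))]
  have habs := abs_le.mp hpert
  have : qf A₀ x ≤ -δ * (star x ⬝ᵥ x).re := hle
  nlinarith

end Alg3

section Kernel

/-- coefficient matrix -/
def CmMat (C : ℕ → ℕ → ℂ) (s : ℕ) : Matrix (Fin s) (Fin s) ℂ :=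
  Matrix.of fun i j => C (i : ℕ) (j : ℕ)

def VmatZ {m : ℕ} (z : Fin m → ℂ) (s : ℕ) : Matrix (Fin s) (Fin m) ℂ :=
  Matrix.of fun p i => (conj (z i)) ^ (p : ℕ)

noncomputable def GrMat (C : ℕ → ℕ → ℂ) {m : ℕ} (z : Fin m → ℂ) (s : ℕ) :
    Matrix (Fin m) (Fin m) ℂ :=
  (VmatZ z s)ᴴ * CmMat C s * VmatZ z s

noncomputable def GMat (C : ℕ → ℕ → ℂ) {m : ℕ} (z : Fin m → ℂ) :
    Matrix (Fin m) (Fin m) ℂ :=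
  Matrix.of fun i j => ∑' p : ℕ × ℕ, C p.1 p.2 * (z i) ^ p.1 * (conj (z j)) ^ p.2

variable {R : ℝ} {C : ℕ → ℕ → ℂ}

lemma CmMat_herm (hherm : ∀ m n, C n m = conj (C m n)) (s : ℕ) :
    (CmMat C s).IsHermitian := by
  rw [Matrix.IsHermitian]
  ext i j
  rw [Matrix.conjTranspose_apply]
  show star (C (j : ℕ) (i : ℕ)) = C (i : ℕ) (j : ℕ)
  rw [hherm (j : ℕ) (i : ℕ)]
  simp

lemma summable_Cab
    (hconv : ∀ ρ : ℝ, 0 < ρ → ρ < R →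
      Summable fun p : ℕ × ℕ => ‖C p.1 p.2‖ * ρ ^ (p.1 + p.2))
    (hR : 0 < R) {a b : ℝ} (ha : 0 ≤ a) (hb : 0 ≤ b) (haR : a < R) (hbR : b < R) :
    Summable fun p : ℕ × ℕ => ‖C p.1 p.2‖ * (a ^ p.1 * b ^ p.2) := by
  set ρ : ℝ := (max a b + R) / 2 with hρ
  have hab : max a b < R := max_lt haR hbR
  have h0 : 0 ≤ max a b := le_max_of_le_left ha
  have hρpos : 0 < ρ := by rw [hρ]; linarith
  have hρR : ρ < R := by rw [hρ]; linarith
  have haρ : a ≤ ρ := by have := le_max_left a b; rw [hρ]; linarith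
  have hbρ : b ≤ ρ := by have := le_max_right a b; rw [hρ]; linarith
  apply Summable.of_nonneg_of_le _ _ (hconv ρ hρpos hρR)
  · intro p; positivity
  · intro p
    rw [pow_add]
    apply mul_le_mul_of_nonneg_left _ (norm_nonneg _)
    exact mul_le_mul (pow_le_pow_left₀ ha haρ _) (pow_le_pow_left₀ hb hbρ _)
      (by positivity) (by positivity)

lemma summable_Kterm
    (hconv : ∀ ρ : ℝ, 0 < ρ → ρ < R →
      Summable fun p : ℕ × ℕ => ‖C p.1 p.2‖ * ρ ^ (p.1 + p.2))
    (hR : 0 < R) {w z : ℂ} (hw : ‖w‖ < R) (hz : ‖z‖ < R) :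
    Summable fun p : ℕ × ℕ => C p.1 p.2 * z ^ p.1 * (conj w) ^ p.2 := by
  apply Summable.of_norm
  have := summable_Cab hconv hR (norm_nonneg z) (norm_nonneg w) hz hw
  apply Summable.congr this
  intro p
  rw [norm_mul, norm_mul, norm_pow, norm_pow]
  simp only [Complex.norm_conj]
  ring

lemma GrMat_apply (C : ℕ → ℕ → ℂ) {m : ℕ} (z : Fin m → ℂ) (s : ℕ) (i j : Fin m) :
    GrMat C z s i j = ∑ pq ∈ Finset.range s ×ˢ Finset.range s,
      C pq.1 pq.2 * (z i) ^ pq.1 * (conj (z j)) ^ pq.2 := by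
  have h1 : GrMat C z s i j = ∑ p : Fin s, ∑ q : Fin s,
      C (q : ℕ) (p : ℕ) * z i ^ (q : ℕ) * conj (z j) ^ (p : ℕ) := by
    rw [GrMat, Matrix.mul_apply]
    congr 1; ext p
    rw [Matrix.mul_apply, Finset.sum_mul]
    congr 1; ext q
    rw [Matrix.conjTranspose_apply]
    show star (VmatZ z s q i) * CmMat C s q p * VmatZ z s p j = _
    rw [show VmatZ z s q i = (conj (z i)) ^ (q : ℕ) from rfl,
      show VmatZ z s p j = (conj (z j)) ^ (p : ℕ) from rfl,
      show CmMat C s q p = C (q : ℕ) (p : ℕ) from rfl]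
    rw [star_pow, RCLike.star_def, Complex.conj_conj]
    ring
  rw [h1, Finset.sum_comm, Finset.sum_product]
  rw [← Fin.sum_univ_eq_sum_range
    (fun a => ∑ b ∈ Finset.range s, C a b * z i ^ a * conj (z j) ^ b) s]
  congr 1; ext q
  rw [← Fin.sum_univ_eq_sum_range (fun b => C (q : ℕ) b * z i ^ (q : ℕ) * conj (z j) ^ b) s]

lemma tendsto_GrMat
    (hconv : ∀ ρ : ℝ, 0 < ρ → ρ < R →
      Summable fun p : ℕ × ℕ => ‖C p.1 p.2‖ * ρ ^ (p.1 + p.2))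
    (hR : 0 < R) {m : ℕ} {z : Fin m → ℂ} (hz : ∀ i, ‖z i‖ < R) (i j : Fin m) :
    Filter.Tendsto (fun s => GrMat C z s i j) Filter.atTop (𝓝 (GMat C z i j)) := by
  have hsum := summable_Kterm hconv hR (hz j) (hz i)
  have hhs := hsum.hasSum
  have hmono : Monotone (fun s : ℕ => Finset.range s ×ˢ Finset.range s) := by
    intro a b hab
    exact Finset.product_subset_product (Finset.range_subset_range.mpr hab)
      (Finset.range_subset_range.mpr hab)
  have hexh : ∀ x : ℕ × ℕ, ∃ s, x ∈ Finset.range s ×ˢ Finset.range s := by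
    intro x
    exact ⟨max x.1 x.2 + 1, Finset.mem_product.mpr
      ⟨Finset.mem_range.mpr (by omega), Finset.mem_range.mpr (by omega)⟩⟩
  have := hhs.comp (Filter.tendsto_atTop_finset_of_monotone hmono hexh)
  simp only [Function.comp] at this
  have heq : ∀ s : ℕ, GrMat C z s i j
      = ∑ pq ∈ Finset.range s ×ˢ Finset.range s,
        C pq.1 pq.2 * (z i) ^ pq.1 * (conj (z j)) ^ pq.2 := fun s => GrMat_apply C z s i j
  rw [show GMat C z i j = ∑' p : ℕ × ℕ, C p.1 p.2 * (z i) ^ p.1 * (conj (z j)) ^ p.2 from rfl]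
  exact Filter.Tendsto.congr (fun s => (heq s).symm) this

lemma GrMat_herm (hherm : ∀ m n, C n m = conj (C m n)) {m : ℕ} (z : Fin m → ℂ) (s : ℕ) :
    (GrMat C z s).IsHermitian :=
  Matrix.isHermitian_conjTranspose_mul_mul _ (CmMat_herm hherm s)

lemma GMat_herm (hherm : ∀ m n, C n m = conj (C m n))
    (hconv : ∀ ρ : ℝ, 0 < ρ → ρ < R →
      Summable fun p : ℕ × ℕ => ‖C p.1 p.2‖ * ρ ^ (p.1 + p.2))
    (hR : 0 < R) {m : ℕ} {z : Fin m → ℂ} (hz : ∀ i, ‖z i‖ < R) :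
    (GMat C z).IsHermitian := by
  rw [Matrix.IsHermitian]
  ext i j
  rw [Matrix.conjTranspose_apply]
  have h1 := tendsto_GrMat hconv hR hz j i
  have h2 := tendsto_GrMat hconv hR hz i j
  have h3 : Filter.Tendsto (fun s => star (GrMat C z s j i)) Filter.atTop
      (𝓝 (star (GMat C z j i))) := by
    exact (continuous_star.tendsto _).comp h1
  have h4 : ∀ s, star (GrMat C z s j i) = GrMat C z s i j := by
    intro s
    conv_rhs => rw [← (GrMat_herm hherm z s)]
    rw [Matrix.conjTranspose_apply]
  exact tendsto_nhds_unique (h3.congr h4) h2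

lemma negEig_GMat_le
    (hherm : ∀ m n, C n m = conj (C m n))
    (hconv : ∀ ρ : ℝ, 0 < ρ → ρ < R →
      Summable fun p : ℕ × ℕ => ‖C p.1 p.2‖ * ρ ^ (p.1 + p.2))
    (hR : 0 < R) {m : ℕ} {z : Fin m → ℂ} (hz : ∀ i, ‖z i‖ < R) :
    ∀ᶠ s in Filter.atTop, negEig (GMat C z) ≤ negEig (CmMat C s) := by
  have hlsc := negEig_lsc (A := fun s => GrMat C z s) (GMat_herm hherm hconv hR hz)
    (Filter.Eventually.of_forall (GrMat_herm hherm z))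
    (fun i j => tendsto_GrMat hconv hR hz i j)
  filter_upwards [hlsc] with s hs
  exact hs.trans (negEig_congr_le (CmMat_herm hherm s) (VmatZ z s))

/-- monotonicity of negEig of coefficient matrices -/
lemma CmMat_mono (hherm : ∀ m n, C n m = conj (C m n)) {s s' : ℕ} (h : s ≤ s') :
    negEig (CmMat C s) ≤ negEig (CmMat C s') := by
  classical
  set B : Matrix (Fin s') (Fin s) ℂ :=
    Matrix.of fun i j => if i = Fin.castLE h j then 1 else 0 with hB
  have key : Bᴴ * CmMat C s' * B = CmMat C s := by
    ext α β
    rw [Matrix.mul_apply]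
    have hBapp : ∀ j : Fin s', B j β = if j = Fin.castLE h β then 1 else 0 := fun j => rfl
    simp only [hBapp, mul_ite, mul_one, mul_zero, Finset.sum_ite_eq' Finset.univ,
      Finset.mem_univ, if_true]
    rw [Matrix.mul_apply]
    have hBH : ∀ i : Fin s', Bᴴ α i = if i = Fin.castLE h α then 1 else 0 := by
      intro i
      rw [Matrix.conjTranspose_apply]
      show star (if i = Fin.castLE h α then (1:ℂ) else 0) = _
      split <;> simp
    simp only [hBH, ite_mul, one_mul, zero_mul, Finset.sum_ite_eq' Finset.univ,
      Finset.mem_univ, if_true]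
    show C ((Fin.castLE h α : Fin s') : ℕ) ((Fin.castLE h β : Fin s') : ℕ) = C (α : ℕ) (β : ℕ)
    simp
  calc negEig (CmMat C s) = negEig (Bᴴ * CmMat C s' * B) := by rw [key]
    _ ≤ negEig (CmMat C s') := negEig_congr_le (CmMat_herm hherm s') B

end Kernel

section Vand

variable {R : ℝ} {C : ℕ → ℕ → ℂ}

/-- triple product entry -/
lemma trip_apply {n m : Type*} [Fintype n] [Fintype m] (X : Matrix n m ℂ)
    (M : Matrix n n ℂ) (Y : Matrix n m ℂ) (α β : m) :
    (Xᴴ * M * Y) α β = ∑ i, ∑ j, star (X i α) * M i j * Y j β := by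
  rw [Matrix.mul_apply]
  have h : ∀ j, (Xᴴ * M) α j * Y j β = ∑ i, star (X i α) * M i j * Y j β := by
    intro j
    rw [Matrix.mul_apply, Finset.sum_mul]
    exact Finset.sum_congr rfl fun i _ => by rw [Matrix.conjTranspose_apply]
  rw [Finset.sum_congr rfl fun j _ => h j, Finset.sum_comm]

noncomputable def Umat (s : ℕ) : Matrix (Fin s) (Fin s) ℂ :=
  Matrix.of fun p i => (((i : ℕ) : ℂ) + 1) ^ (p : ℕ)

noncomputable def Amat (s : ℕ) (t : ℝ) : Matrix (Fin s) (Fin s) ℂ :=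
  (Umat s)⁻¹ * Matrix.diagonal (fun p : Fin s => ((t : ℂ)⁻¹) ^ (p : ℕ))

noncomputable def Wmat (s : ℕ) (t : ℝ) : Matrix (Fin s) (Fin s) ℂ :=
  Matrix.of fun p i => ((t : ℂ) * (((i : ℕ) : ℂ) + 1)) ^ (p : ℕ)

def zpts (s : ℕ) (t : ℝ) : Fin s → ℂ := fun i => (t : ℂ) * (((i : ℕ) : ℂ) + 1)

noncomputable def gau (s : ℕ) (β : Fin s) (q : ℕ) : ℂ :=
  ∑ j : Fin s, (((j : ℕ) : ℂ) + 1) ^ q * (Umat s)⁻¹ j β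

noncomputable def hhau (s : ℕ) (β : Fin s) (q : ℕ) (t : ℝ) : ℂ :=
  ∑ j, (zpts s t j) ^ q * (Amat s t) j β

noncomputable def cU (s : ℕ) : ℝ := ∑ j, ∑ k, ‖(Umat s)⁻¹ j k‖

lemma Umat_det_ne (s : ℕ) : (Umat s).det ≠ 0 := by
  have htr : (Umat s)ᵀ = Matrix.vandermonde (fun i : Fin s => (((i : ℕ) : ℂ) + 1)) := by
    ext i j; rfl
  have hdet : (Umat s).det
      = ∏ i : Fin s, ∏ j ∈ Finset.Ioi i, ((((j : ℕ) : ℂ) + 1) - (((i : ℕ) : ℂ) + 1)) := by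
    rw [← Matrix.det_transpose, htr, Matrix.det_vandermonde]
  rw [hdet]
  apply Finset.prod_ne_zero_iff.mpr
  intro i _
  apply Finset.prod_ne_zero_iff.mpr
  intro j hj
  have hij' : i < j := Finset.mem_Ioi.mp hj
  have hij : (i : ℕ) < (j : ℕ) := hij'
  intro h
  rw [sub_eq_zero] at h
  have h3 : ((j : ℕ) : ℂ) = ((i : ℕ) : ℂ) := by linear_combination h
  have := Nat.cast_inj (R := ℂ).mp h3
  omega

lemma Umat_mul_inv (s : ℕ) : Umat s * (Umat s)⁻¹ = 1 :=
  Matrix.mul_nonsing_inv _ (isUnit_iff_ne_zero.mpr (Umat_det_ne s))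

lemma Umat_inv_mul (s : ℕ) : (Umat s)⁻¹ * Umat s = 1 :=
  Matrix.nonsing_inv_mul _ (isUnit_iff_ne_zero.mpr (Umat_det_ne s))

lemma Wmat_eq (s : ℕ) (t : ℝ) :
    Wmat s t = Matrix.diagonal (fun p : Fin s => (t : ℂ) ^ (p : ℕ)) * Umat s := by
  ext p i
  rw [Matrix.diagonal_mul]
  show ((t : ℂ) * (((i : ℕ) : ℂ) + 1)) ^ (p : ℕ) = (t:ℂ)^(p:ℕ) * (((i : ℕ) : ℂ) + 1) ^ (p:ℕ)
  rw [mul_pow]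

lemma Amat_mul_Wmat (s : ℕ) {t : ℝ} (ht : t ≠ 0) : Amat s t * Wmat s t = 1 := by
  have htc : (t : ℂ) ≠ 0 := Complex.ofReal_ne_zero.mpr ht
  rw [Amat, Wmat_eq, Matrix.mul_assoc, ← Matrix.mul_assoc (Matrix.diagonal _),
    Matrix.diagonal_mul_diagonal]
  have : (fun p : Fin s => ((t:ℂ)⁻¹)^(p:ℕ) * (t:ℂ)^(p:ℕ)) = fun _ => (1:ℂ) := by
    ext p
    rw [← mul_pow, inv_mul_cancel₀ htc, one_pow]
  rw [this, Matrix.diagonal_one, Matrix.one_mul, Umat_inv_mul]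

lemma Wmat_mul_Amat (s : ℕ) {t : ℝ} (ht : t ≠ 0) : Wmat s t * Amat s t = 1 := by
  rw [mul_eq_one_comm]
  exact Amat_mul_Wmat s ht

lemma zpts_conj (s : ℕ) (t : ℝ) (i : Fin s) : conj (zpts s t i) = zpts s t i := by
  simp [zpts, Complex.conj_ofReal]

lemma Amat_apply (s : ℕ) (t : ℝ) (j β : Fin s) :
    Amat s t j β = (Umat s)⁻¹ j β * ((t : ℂ)⁻¹) ^ (β : ℕ) := by
  rw [Amat, Matrix.mul_diagonal]

lemma hhau_eq (s : ℕ) (β : Fin s) (q : ℕ) (t : ℝ) :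
    hhau s β q t = (t : ℂ) ^ q * ((t : ℂ)⁻¹) ^ (β : ℕ) * gau s β q := by
  rw [hhau, gau, Finset.mul_sum]
  congr 1; ext j
  rw [Amat_apply, zpts, mul_pow]
  ring

lemma gau_small (s : ℕ) (γ β : Fin s) :
    gau s β (γ : ℕ) = if γ = β then 1 else 0 := by
  have : gau s β (γ : ℕ) = (Umat s * (Umat s)⁻¹) γ β := by
    rw [Matrix.mul_apply, gau]
    exact Finset.sum_congr rfl fun j _ => rfl
  rw [this, Umat_mul_inv, Matrix.one_apply]

lemma hhau_small (s : ℕ) (β : Fin s) {p : ℕ} (hp : p < s) {t : ℝ} (ht : t ≠ 0) :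
    hhau s β p t = if p = (β : ℕ) then 1 else 0 := by
  have htc : (t : ℂ) ≠ 0 := Complex.ofReal_ne_zero.mpr ht
  set γ : Fin s := ⟨p, hp⟩ with hγ
  have hpγ : p = (γ : ℕ) := rfl
  rw [hpγ, hhau_eq, gau_small]
  by_cases h : γ = β
  · rw [if_pos h, if_pos (by rw [h]), mul_one, ← h]
    rw [← mul_pow, mul_inv_cancel₀ htc, one_pow]
  · rw [if_neg h, if_neg (by intro hc; exact h (Fin.ext hc)), mul_zero]

lemma hhau_tail (s : ℕ) (β : Fin s) {q : ℕ} (hq : (β : ℕ) ≤ q) {t : ℝ} (ht : t ≠ 0) :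
    hhau s β q t = (t : ℂ) ^ (q - (β : ℕ)) * gau s β q := by
  have htc : (t : ℂ) ≠ 0 := Complex.ofReal_ne_zero.mpr ht
  rw [hhau_eq]
  congr 1
  have h1 : (t:ℂ) ^ q = (t:ℂ)^(q - (β:ℕ)) * (t:ℂ)^(β:ℕ) := by
    rw [← pow_add]; congr 1; omega
  rw [h1, mul_assoc, ← mul_pow, mul_inv_cancel₀ htc, one_pow, mul_one]

lemma gau_bound (s : ℕ) (β : Fin s) (q : ℕ) :
    ‖gau s β q‖ ≤ cU s * (s : ℝ) ^ q := by
  rw [gau]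
  refine (norm_sum_le _ _).trans ?_
  have h1 : ∀ j : Fin s, ‖(((j : ℕ) : ℂ) + 1) ^ q * (Umat s)⁻¹ j β‖
      ≤ (s : ℝ)^q * ‖(Umat s)⁻¹ j β‖ := by
    intro j
    rw [norm_mul, norm_pow]
    apply mul_le_mul_of_nonneg_right _ (norm_nonneg _)
    apply pow_le_pow_left₀ (norm_nonneg _)
    have : (((j : ℕ) : ℂ) + 1) = (((j : ℕ) + 1 : ℕ) : ℂ) := by push_cast; ring
    rw [this, Complex.norm_natCast]
    exact_mod_cast Nat.succ_le_of_lt j.isLt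
  refine (Finset.sum_le_sum fun j _ => h1 j).trans ?_
  rw [← Finset.mul_sum]
  rw [mul_comm (cU s)]
  apply mul_le_mul_of_nonneg_left _ (by positivity)
  rw [cU]
  apply Finset.sum_le_sum
  intro j _
  exact Finset.single_le_sum (fun k _ => norm_nonneg _) (Finset.mem_univ β)

end Vand

section Vand2
variable {R : ℝ} {C : ℕ → ℕ → ℂ}

lemma Pt_apply
    (hconv : ∀ ρ : ℝ, 0 < ρ → ρ < R →
      Summable fun p : ℕ × ℕ => ‖C p.1 p.2‖ * ρ ^ (p.1 + p.2))
    (hR : 0 < R) {s : ℕ} {t : ℝ}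
    (hzlt : ∀ i : Fin s, ‖zpts s t i‖ < R) (α β : Fin s) :
    ((Amat s t)ᴴ * GMat C (zpts s t) * Amat s t) α β
      = ∑' pq : ℕ × ℕ, C pq.1 pq.2 * conj (hhau s α pq.1 t) * hhau s β pq.2 t := by
  set A := Amat s t with hA
  set z := zpts s t with hz
  have hsummable : ∀ i j : Fin s,
      Summable (fun pq : ℕ × ℕ => C pq.1 pq.2 * (z i) ^ pq.1 * (conj (z j)) ^ pq.2) :=
    fun i j => summable_Kterm hconv hR (hzlt j) (hzlt i)
  have hsum2 : ∀ i j : Fin s, Summable (fun pq : ℕ × ℕ =>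
      star (A i α) * (C pq.1 pq.2 * (z i) ^ pq.1 * (conj (z j)) ^ pq.2) * A j β) := by
    intro i j
    have := ((hsummable i j).mul_left (star (A i α))).mul_right (A j β)
    exact this
  rw [trip_apply]
  have step2 : ∀ i j : Fin s, star (A i α) * GMat C z i j * A j β
      = ∑' pq : ℕ × ℕ,
        star (A i α) * (C pq.1 pq.2 * (z i) ^ pq.1 * (conj (z j)) ^ pq.2) * A j β := by
    intro i j
    rw [show GMat C z i j
      = ∑' pq : ℕ × ℕ, C pq.1 pq.2 * (z i) ^ pq.1 * (conj (z j)) ^ pq.2 from rfl]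
    rw [← tsum_mul_left, ← tsum_mul_right]
  rw [Finset.sum_congr rfl fun i _ => Finset.sum_congr rfl fun j _ => step2 i j]
  have inner : ∀ i : Fin s, ∑ j, ∑' pq : ℕ × ℕ,
        star (A i α) * (C pq.1 pq.2 * (z i) ^ pq.1 * (conj (z j)) ^ pq.2) * A j β
      = ∑' pq : ℕ × ℕ, ∑ j,
        star (A i α) * (C pq.1 pq.2 * (z i) ^ pq.1 * (conj (z j)) ^ pq.2) * A j β :=
    fun i => (Summable.tsum_finsetSum (fun j _ => hsum2 i j)).symm
  rw [Finset.sum_congr rfl fun i _ => inner i]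
  rw [← Summable.tsum_finsetSum (fun i _ => summable_sum (fun j _ => hsum2 i j))]
  apply tsum_congr
  intro pq
  have hcg : conj (hhau s α pq.1 t) = ∑ i, star (A i α) * (z i) ^ pq.1 := by
    rw [hhau, map_sum]
    apply Finset.sum_congr rfl
    intro i _
    rw [_root_.map_mul, map_pow, zpts_conj]
    show (z i)^pq.1 * conj (A i α) = _
    rw [RCLike.star_def]
    ring
  have h5 : ∀ i, ∑ j, star (A i α) * (C pq.1 pq.2 * (z i) ^ pq.1 * (conj (z j)) ^ pq.2) * A j β
      = (star (A i α) * (z i) ^ pq.1) * (C pq.1 pq.2 * hhau s β pq.2 t) := by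
    intro i
    rw [hhau, Finset.mul_sum, Finset.mul_sum]
    apply Finset.sum_congr rfl
    intro j _
    rw [show conj (z j) = z j from zpts_conj s t j]
    ring
  rw [Finset.sum_congr rfl fun i _ => h5 i, ← Finset.sum_mul, ← hcg]
  ring

end Vand2

section Vand3
variable {R : ℝ} {C : ℕ → ℕ → ℂ}

lemma zpts_abs (s : ℕ) {t : ℝ} (ht : 0 < t) (i : Fin s) :
    ‖zpts s t i‖ = t * ((i : ℕ) + 1) := by
  rw [zpts, norm_mul, Complex.norm_real, Real.norm_eq_abs, abs_of_pos ht]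
  congr 1
  have : (((i : ℕ) : ℂ) + 1) = (((i : ℕ) + 1 : ℕ) : ℂ) := by push_cast; ring
  rw [this, Complex.norm_natCast]
  push_cast; ring

lemma Pt_tendsto
    (hconv : ∀ ρ : ℝ, 0 < ρ → ρ < R →
      Summable fun p : ℕ × ℕ => ‖C p.1 p.2‖ * ρ ^ (p.1 + p.2))
    (hR : 0 < R) {s : ℕ} (hs : 0 < s) (α β : Fin s) :
    Filter.Tendsto (fun t : ℝ => ((Amat s t)ᴴ * GMat C (zpts s t) * Amat s t) α β)
      (𝓝[>] (0:ℝ)) (𝓝 (C (α : ℕ) (β : ℕ))) := by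
  classical
  set x₀ : ℝ := min 1 (R/2) with hx₀
  have hx₀pos : 0 < x₀ := lt_min one_pos (by linarith)
  have hx₀le1 : x₀ ≤ 1 := min_le_left _ _
  have hx₀R : x₀ < R := lt_of_le_of_lt (min_le_right _ _) (by linarith)
  have hspos : (0:ℝ) < s := Nat.cast_pos.mpr hs
  have hs1 : (1:ℝ) ≤ s := Nat.one_le_cast.mpr hs
  set t₀ : ℝ := x₀ / s with ht₀def
  have ht₀pos : 0 < t₀ := div_pos hx₀pos hspos
  have ht₀s : t₀ * s = x₀ := div_mul_cancel₀ _ (ne_of_gt hspos)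
  have ht₀le1 : t₀ ≤ 1 := by
    rw [ht₀def, div_le_one hspos]; linarith
  have hcU : 0 ≤ cU s :=
    Finset.sum_nonneg fun j _ => Finset.sum_nonneg fun k _ => norm_nonneg _
  set c₁ : ℝ := cU s * (s:ℝ)^s with hc₁def
  have hc₁ : 0 ≤ c₁ := by positivity
  set c₂ : ℝ := c₁^2 + c₁ + 1 with hc₂def
  have hc₁c₂ : c₁ ≤ c₂ := by nlinarith
  have hc₁sqc₂ : c₁^2 ≤ c₂ := by nlinarith
  have hc₂pos : 0 < c₂ := by positivity
  -- the tail bounds on hhau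
  have hhh1 : ∀ (δ : Fin s) (q : ℕ) (t : ℝ), 0 < t → t ≤ t₀ → s ≤ q →
      ‖hhau s δ q t‖ ≤ c₁ * x₀^(q-s) := by
    intro δ q t ht htt₀ hqs
    have hδq : (δ : ℕ) ≤ q := le_trans (le_of_lt δ.isLt) hqs
    rw [hhau_tail s δ hδq (ne_of_gt ht), norm_mul, norm_pow, Complex.norm_real, Real.norm_eq_abs,
      abs_of_pos ht]
    have h1 : ‖gau s δ q‖ ≤ cU s * (s:ℝ)^q := gau_bound s δ q
    have h2 : t^(q-(δ:ℕ)) ≤ t₀^(q-s) := by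
      calc t^(q-(δ:ℕ)) ≤ t^(q-s) :=
            pow_le_pow_of_le_one ht.le (le_trans htt₀ ht₀le1) (by omega)
        _ ≤ t₀^(q-s) := pow_le_pow_left₀ ht.le htt₀ _
    calc t^(q-(δ:ℕ)) * ‖gau s δ q‖ ≤ t₀^(q-s) * (cU s * (s:ℝ)^q) := by
          apply mul_le_mul h2 h1 (norm_nonneg _) (by positivity)
      _ = c₁ * x₀^(q-s) := by
          rw [hc₁def, ← ht₀s]
          have hq : (s:ℝ)^q = (s:ℝ)^s * (s:ℝ)^(q-s) := by
            rw [← pow_add]; congr 1; omega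
          rw [hq, mul_pow]
          ring
  have hhh2 : ∀ (δ : Fin s) (q : ℕ) (t : ℝ), 0 < t → t ≤ t₀ → s ≤ q →
      ‖hhau s δ q t‖ ≤ t * (c₁ * x₀^(q-s)) := by
    intro δ q t ht htt₀ hqs
    have hδq : (δ : ℕ) ≤ q := le_trans (le_of_lt δ.isLt) hqs
    rw [hhau_tail s δ hδq (ne_of_gt ht), norm_mul, norm_pow, Complex.norm_real, Real.norm_eq_abs,
      abs_of_pos ht]
    have h1 : ‖gau s δ q‖ ≤ cU s * (s:ℝ)^q := gau_bound s δ q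
    have hqδ1 : 1 ≤ q - (δ:ℕ) := by omega
    have h2 : t^(q-(δ:ℕ)) ≤ t * t₀^(q-s) := by
      have hsplit : t^(q-(δ:ℕ)) = t * t^(q-(δ:ℕ)-1) := by
        rw [← pow_succ']; congr 1; omega
      rw [hsplit]
      apply mul_le_mul_of_nonneg_left _ ht.le
      calc t^(q-(δ:ℕ)-1) ≤ t^(q-s) :=
            pow_le_pow_of_le_one ht.le (le_trans htt₀ ht₀le1) (by omega)
        _ ≤ t₀^(q-s) := pow_le_pow_left₀ ht.le htt₀ _
    calc t^(q-(δ:ℕ)) * ‖gau s δ q‖ ≤ (t * t₀^(q-s)) * (cU s * (s:ℝ)^q) := by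
          apply mul_le_mul h2 h1 (norm_nonneg _) (by positivity)
      _ = t * (c₁ * x₀^(q-s)) := by
          rw [hc₁def, ← ht₀s]
          have hq : (s:ℝ)^q = (s:ℝ)^s * (s:ℝ)^(q-s) := by
            rw [← pow_add]; congr 1; omega
          rw [hq, mul_pow]
          ring
  have hhsmall_le : ∀ (δ : Fin s) (p : ℕ) (t : ℝ), 0 < t → p < s →
      ‖hhau s δ p t‖ ≤ 1 := by
    intro δ p t ht hp
    rw [hhau_small s δ hp (ne_of_gt ht)]
    split_ifs <;> simp
  set T0 : ℕ × ℕ → ℂ := fun pq => if pq = ((α:ℕ), (β:ℕ)) then C (α:ℕ) (β:ℕ) else 0 with hT0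
  set b : ℕ × ℕ → ℝ := fun pq =>
    ‖C pq.1 pq.2‖ * (c₂ * x₀^((pq.1 - s) + (pq.2 - s))) with hbdef
  have hbnn : ∀ pq, 0 ≤ b pq := by
    intro pq
    rw [hbdef]
    have := norm_nonneg (C pq.1 pq.2)
    positivity
  have hb : Summable b := by
    have hmaj : Summable (fun pq : ℕ × ℕ => (c₂ / x₀^(2*s)) *
        (‖C pq.1 pq.2‖ * (x₀^pq.1 * x₀^pq.2))) :=
      (summable_Cab hconv hR hx₀pos.le hx₀pos.le hx₀R hx₀R).mul_left _
    apply Summable.of_nonneg_of_le hbnn _ hmaj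
    intro pq
    rw [hbdef]
    have hexp : x₀^((pq.1 - s) + (pq.2 - s)) * x₀^(2*s) ≤ x₀^pq.1 * x₀^pq.2 := by
      rw [← pow_add, ← pow_add]
      apply pow_le_pow_of_le_one hx₀pos.le hx₀le1
      omega
    rw [div_mul_eq_mul_div, le_div_iff₀ (by positivity)]
    dsimp only
    have key : ‖C pq.1 pq.2‖ * (c₂ * x₀^((pq.1 - s) + (pq.2 - s))) * x₀^(2*s)
        = (c₂ * ‖C pq.1 pq.2‖) * (x₀^((pq.1 - s) + (pq.2 - s)) * x₀^(2*s)) := by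
      ring
    have key2 : c₂ * (‖C pq.1 pq.2‖ * (x₀^pq.1 * x₀^pq.2))
        = (c₂ * ‖C pq.1 pq.2‖) * (x₀^pq.1 * x₀^pq.2) := by ring
    rw [key, key2]
    exact mul_le_mul_of_nonneg_left hexp
      (mul_nonneg hc₂pos.le (norm_nonneg (C pq.1 pq.2)))
  have hdiff : ∀ (t : ℝ), 0 < t → t ≤ t₀ → ∀ pq : ℕ × ℕ,
      ‖C pq.1 pq.2 * conj (hhau s α pq.1 t) * hhau s β pq.2 t - T0 pq‖
        ≤ t * b pq := by
    intro t ht htt₀ pq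
    obtain ⟨p, q⟩ := pq
    dsimp only
    have htne : t ≠ 0 := ne_of_gt ht
    by_cases hp : p < s
    · by_cases hq : q < s
      · have h0 : C p q * conj (hhau s α p t) * hhau s β q t - T0 (p, q) = 0 := by
          rw [hhau_small s α hp htne, hhau_small s β hq htne]
          rcases eq_or_ne p ((α:ℕ)) with hpα | hpα <;>
            rcases eq_or_ne q ((β:ℕ)) with hqβ | hqβ <;>
            simp [hT0, Prod.ext_iff, hpα, hqβ]
        rw [h0, norm_zero]
        exact mul_nonneg ht.le (hbnn _)
      · push_neg at hq
        have hqβ : q ≠ (β:ℕ) := by have := β.isLt; omega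
        have hT00 : T0 (p, q) = 0 := by simp [hT0, Prod.ext_iff, hqβ]
        rw [hT00, sub_zero, norm_mul, norm_mul, Complex.norm_conj]
        have h1 : ‖hhau s α p t‖ ≤ 1 := hhsmall_le α p t ht hp
        have h2 : ‖hhau s β q t‖ ≤ t * (c₁ * x₀^(q-s)) := hhh2 β q t ht htt₀ hq
        have hps : p - s = 0 := by omega
        have hX : (0:ℝ) ≤ x₀^(q-s) := by positivity
        calc ‖C p q‖ * ‖hhau s α p t‖ * ‖hhau s β q t‖
            ≤ ‖C p q‖ * 1 * (t * (c₁ * x₀^(q-s))) :=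
              mul_le_mul (mul_le_mul_of_nonneg_left h1 (norm_nonneg _)) h2
                (norm_nonneg _) (by positivity)
          _ ≤ t * b (p, q) := by
              rw [hbdef]
              dsimp only
              rw [hps, zero_add]
              have key : ‖C p q‖ * 1 * (t * (c₁ * x₀^(q-s)))
                  = t * (‖C p q‖ * (c₁ * x₀^(q-s))) := by ring
              rw [key]
              apply mul_le_mul_of_nonneg_left _ ht.le
              apply mul_le_mul_of_nonneg_left _ (norm_nonneg _)
              exact mul_le_mul_of_nonneg_right hc₁c₂ hX
    · push_neg at hp
      have hpα : p ≠ (α:ℕ) := by have := α.isLt; omega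
      have hT00 : T0 (p, q) = 0 := by simp [hT0, Prod.ext_iff, hpα]
      rw [hT00, sub_zero, norm_mul, norm_mul, Complex.norm_conj]
      by_cases hq : q < s
      · have h1 : ‖hhau s α p t‖ ≤ t * (c₁ * x₀^(p-s)) := hhh2 α p t ht htt₀ hp
        have h2 : ‖hhau s β q t‖ ≤ 1 := hhsmall_le β q t ht hq
        have hqs : q - s = 0 := by omega
        have hX : (0:ℝ) ≤ x₀^(p-s) := by positivity
        calc ‖C p q‖ * ‖hhau s α p t‖ * ‖hhau s β q t‖
            ≤ ‖C p q‖ * (t * (c₁ * x₀^(p-s))) * 1 :=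
              mul_le_mul (mul_le_mul_of_nonneg_left h1 (norm_nonneg _)) h2
                (norm_nonneg _) (by positivity)
          _ ≤ t * b (p, q) := by
              rw [hbdef]
              dsimp only
              rw [hqs, add_zero]
              have key : ‖C p q‖ * (t * (c₁ * x₀^(p-s))) * 1
                  = t * (‖C p q‖ * (c₁ * x₀^(p-s))) := by ring
              rw [key]
              apply mul_le_mul_of_nonneg_left _ ht.le
              apply mul_le_mul_of_nonneg_left _ (norm_nonneg _)
              exact mul_le_mul_of_nonneg_right hc₁c₂ hX
      · push_neg at hq
        have h1 : ‖hhau s α p t‖ ≤ c₁ * x₀^(p-s) := hhh1 α p t ht htt₀ hp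
        have h2 : ‖hhau s β q t‖ ≤ t * (c₁ * x₀^(q-s)) := hhh2 β q t ht htt₀ hq
        have hXp : (0:ℝ) ≤ x₀^(p-s) := by positivity
        have hXq : (0:ℝ) ≤ x₀^(q-s) := by positivity
        calc ‖C p q‖ * ‖hhau s α p t‖ * ‖hhau s β q t‖
            ≤ ‖C p q‖ * (c₁ * x₀^(p-s)) * (t * (c₁ * x₀^(q-s))) :=
              mul_le_mul (mul_le_mul_of_nonneg_left h1 (norm_nonneg _)) h2
                (norm_nonneg _) (by positivity)
          _ ≤ t * b (p, q) := by
              rw [hbdef]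
              dsimp only
              rw [pow_add]
              have key : ‖C p q‖ * (c₁ * x₀^(p-s)) * (t * (c₁ * x₀^(q-s)))
                  = t * (‖C p q‖ * (c₁^2 * (x₀^(p-s) * x₀^(q-s)))) := by ring
              rw [key]
              apply mul_le_mul_of_nonneg_left _ ht.le
              apply mul_le_mul_of_nonneg_left _ (norm_nonneg _)
              exact mul_le_mul_of_nonneg_right hc₁sqc₂ (mul_nonneg hXp hXq)
  -- summability of T0 and its tsum
  have hT0sum : Summable T0 := by
    apply summable_of_ne_finset_zero (s := {((α:ℕ), (β:ℕ))})
    intro pq hpq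
    rw [hT0]
    exact if_neg (by simpa using hpq)
  have hT0tsum : ∑' pq, T0 pq = C (α:ℕ) (β:ℕ) := by
    rw [hT0]
    rw [tsum_eq_single ((α:ℕ), (β:ℕ)) (fun pq hpq => if_neg hpq)]
    simp
  -- the eventual bound
  set K : ℝ := ∑' pq, b pq with hK
  have hbound : ∀ (t : ℝ), 0 < t → t ≤ t₀ →
      ‖((Amat s t)ᴴ * GMat C (zpts s t) * Amat s t) α β - C (α:ℕ) (β:ℕ)‖ ≤ t * K := by
    intro t ht htt₀
    have hzlt : ∀ i : Fin s, ‖zpts s t i‖ < R := by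
      intro i
      rw [zpts_abs s ht]
      have h1 : ((i:ℕ) : ℝ) + 1 ≤ (s:ℝ) := by
        have := i.isLt; exact_mod_cast Nat.succ_le_of_lt this
      calc t * ((i:ℕ) + 1) ≤ t₀ * s :=
            mul_le_mul htt₀ h1 (by positivity) ht₀pos.le
        _ = x₀ := ht₀s
        _ < R := hx₀R
    set T : ℕ × ℕ → ℂ := fun pq => C pq.1 pq.2 * conj (hhau s α pq.1 t) * hhau s β pq.2 t
      with hTdef
    have hTd : Summable (fun pq => T pq - T0 pq) := by
      apply Summable.of_norm_bounded (hb.mul_left t)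
      intro pq
      exact hdiff t ht htt₀ pq
    have hTsum : Summable T := by
      have : T = fun pq => (T pq - T0 pq) + T0 pq := by ext pq; ring
      rw [this]
      exact hTd.add hT0sum
    rw [Pt_apply hconv hR hzlt α β]
    rw [show (∑' pq : ℕ × ℕ, C pq.1 pq.2 * conj (hhau s α pq.1 t) * hhau s β pq.2 t)
      = ∑' pq, T pq from rfl]
    rw [← hT0tsum, ← Summable.tsum_sub hTsum hT0sum]
    have hnorms : Summable (fun pq => ‖T pq - T0 pq‖) := by
      apply Summable.of_nonneg_of_le (fun pq => norm_nonneg _) _ (hb.mul_left t)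
      intro pq
      exact hdiff t ht htt₀ pq
    calc ‖∑' pq, (T pq - T0 pq)‖ ≤ ∑' pq, ‖T pq - T0 pq‖ := norm_tsum_le_tsum_norm hnorms
      _ ≤ ∑' pq, t * b pq := by
          apply Summable.tsum_le_tsum _ hnorms (hb.mul_left t)
          intro pq
          exact hdiff t ht htt₀ pq
      _ = t * K := by rw [hK, tsum_mul_left]
  -- conclude by squeezing
  have hev : ∀ᶠ t in 𝓝[>] (0:ℝ),
      ‖((Amat s t)ᴴ * GMat C (zpts s t) * Amat s t) α β - C (α:ℕ) (β:ℕ)‖ ≤ t * K := by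
    have h1 : ∀ᶠ t in 𝓝[>] (0:ℝ), 0 < t := eventually_mem_nhdsWithin
    have h2 : ∀ᶠ t in 𝓝[>] (0:ℝ), t < t₀ :=
      (eventually_lt_nhds ht₀pos).filter_mono nhdsWithin_le_nhds
    filter_upwards [h1, h2] with t ht ht'
    exact hbound t ht ht'.le
  have hK0 : Filter.Tendsto (fun t : ℝ => t * K) (𝓝[>] (0:ℝ)) (𝓝 0) := by
    have h1 : Filter.Tendsto (fun t : ℝ => t * K) (𝓝 (0:ℝ)) (𝓝 (0 * K)) :=
      (continuous_id.mul continuous_const).tendsto 0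
    rw [zero_mul] at h1
    exact h1.mono_left nhdsWithin_le_nhds
  have h3 := squeeze_zero_norm' hev hK0
  have h4 := h3.add_const (C (α:ℕ) (β:ℕ))
  rw [zero_add] at h4
  apply h4.congr
  intro t
  ring

end Vand3

section Glue
variable {R : ℝ} {C : ℕ → ℕ → ℂ}

lemma EV_lemma (hherm : ∀ m n, C n m = conj (C m n))
    (hconv : ∀ ρ : ℝ, 0 < ρ → ρ < R →
      Summable fun p : ℕ × ℕ => ‖C p.1 p.2‖ * ρ ^ (p.1 + p.2))
    (hR : 0 < R) {s : ℕ} (hs : 0 < s) :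
    ∀ᶠ t in 𝓝[>] (0:ℝ), (∀ i : Fin s, ‖zpts s t i‖ < R) ∧
      negEig (CmMat C s) ≤ negEig (GMat C (zpts s t)) := by
  have hspos : (0:ℝ) < s := Nat.cast_pos.mpr hs
  have hevz : ∀ᶠ t in 𝓝[>] (0:ℝ), ∀ i : Fin s, ‖zpts s t i‖ < R := by
    have h1 : ∀ᶠ t in 𝓝[>] (0:ℝ), 0 < t := eventually_mem_nhdsWithin
    have h2 : ∀ᶠ t in 𝓝[>] (0:ℝ), t < R / s :=
      (eventually_lt_nhds (div_pos hR hspos)).filter_mono nhdsWithin_le_nhds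
    filter_upwards [h1, h2] with t ht ht'
    intro i
    rw [zpts_abs s ht]
    have hi : ((i:ℕ) : ℝ) + 1 ≤ (s:ℝ) := by
      have := i.isLt; exact_mod_cast Nat.succ_le_of_lt this
    calc t * ((i:ℕ) + 1) ≤ t * s := mul_le_mul_of_nonneg_left hi ht.le
      _ < R := by rw [lt_div_iff₀ hspos] at ht'; exact ht'
  have hHerm : ∀ᶠ t in 𝓝[>] (0:ℝ),
      ((Amat s t)ᴴ * GMat C (zpts s t) * Amat s t).IsHermitian := by
    filter_upwards [hevz] with t htz
    exact Matrix.isHermitian_conjTranspose_mul_mul _ (GMat_herm hherm hconv hR htz)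
  have hlsc := negEig_lsc (l := 𝓝[>] (0:ℝ))
    (A := fun t => (Amat s t)ᴴ * GMat C (zpts s t) * Amat s t)
    (CmMat_herm hherm s) hHerm (fun α β => Pt_tendsto hconv hR hs α β)
  filter_upwards [hevz, hlsc] with t htz hle
  exact ⟨htz, le_trans hle
    (negEig_congr_le (GMat_herm hherm hconv hR htz) (Amat s t))⟩

lemma kernelMatrix_eq {K : ℂ → ℂ → ℂ}
    (hK : ∀ w z : ℂ, ‖w‖ < R → ‖z‖ < R →
      K w z = ∑' p : ℕ × ℕ, C p.1 p.2 * z ^ p.1 * (conj w) ^ p.2)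
    {m : ℕ} (z : Fin m → ℂ) (hz : ∀ i, ‖z i‖ < R) :
    (Matrix.of fun i j => K (z j) (z i)) = GMat C z := by
  ext i j
  exact hK (z j) (z i) (hz j) (hz i)

end Glue

/-- a holomorphic Hermitian kernel
`K(w,z) = Σ C(m,n) z^m conj(w)^n` on the disk of radius `R` has exactly `κ`
negative squares iff every coefficient matrix `(C(m,n))_{m,n=0}^r` has at most
`κ` negative eigenvalues, with equality for all sufficiently large `r`. -/
theorem holomorphic_kernel_negSquares_iff_coefficient_matrices
    (R : ℝ) (hR : 0 < R) (C : ℕ → ℕ → ℂ)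
    (hherm : ∀ m n, C n m = conj (C m n))
    (hconv : ∀ ρ : ℝ, 0 < ρ → ρ < R →
      Summable fun p : ℕ × ℕ => ‖C p.1 p.2‖ * ρ ^ (p.1 + p.2))
    (K : ℂ → ℂ → ℂ)
    (hK : ∀ w z : ℂ, ‖w‖ < R → ‖z‖ < R →
      K w z = ∑' p : ℕ × ℕ, C p.1 p.2 * z ^ p.1 * (conj w) ^ p.2)
    (κ : ℕ) :
    HasNegSquares {z : ℂ | ‖z‖ < R} K κ ↔
      ((∀ r : ℕ,
          negEig (Matrix.of fun i j : Fin (r + 1) => C (i : ℕ) (j : ℕ)) ≤ κ) ∧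
        ∃ N, ∀ r ≥ N,
          negEig (Matrix.of fun i j : Fin (r + 1) => C (i : ℕ) (j : ℕ)) = κ) := by
  unfold HasNegSquares
  have hCm : ∀ r : ℕ, (Matrix.of fun i j : Fin (r + 1) => C (i : ℕ) (j : ℕ))
      = CmMat C (r + 1) := fun r => rfl
  constructor
  · rintro ⟨h1, m, zw, hzw, hκ⟩
    have hzw' : ∀ i, ‖zw i‖ < R := fun i => hzw i
    have hCle : ∀ r : ℕ, negEig (CmMat C (r + 1)) ≤ κ := by
      intro r
      obtain ⟨t, htz, htle⟩ := (EV_lemma hherm hconv hR (Nat.succ_pos r)).exists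
      refine le_trans htle ?_
      rw [← kernelMatrix_eq hK (zpts (r+1) t) htz]
      exact h1 (r+1) (zpts (r+1) t) (fun i => htz i)
    refine ⟨fun r => by rw [hCm r]; exact hCle r, ?_⟩
    have hG : negEig (GMat C zw) = κ := by
      rw [← kernelMatrix_eq hK zw hzw']
      exact hκ
    have h2 := negEig_GMat_le hherm hconv hR hzw'
    obtain ⟨s₁, hs₁, hs₁ge⟩ := (h2.and (Filter.eventually_ge_atTop 1)).exists
    refine ⟨s₁, fun r hr => ?_⟩
    rw [hCm r]
    refine le_antisymm (hCle r) ?_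
    calc κ = negEig (GMat C zw) := hG.symm
      _ ≤ negEig (CmMat C s₁) := hs₁
      _ ≤ negEig (CmMat C (r+1)) := CmMat_mono hherm (by omega)
  · rintro ⟨h1, N, hN⟩
    have h1' : ∀ r : ℕ, negEig (CmMat C (r + 1)) ≤ κ := by
      intro r
      rw [← hCm r]
      exact h1 r
    have hbnd : ∀ (m : ℕ) (z : Fin m → ℂ), (∀ i, ‖z i‖ < R) →
        negEig (GMat C z) ≤ κ := by
      intro m z hz
      have h2 := negEig_GMat_le hherm hconv hR hz
      obtain ⟨s₁, hs₁, hs₁ge⟩ := (h2.and (Filter.eventually_ge_atTop 1)).exists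
      have hs' : s₁ - 1 + 1 = s₁ := by omega
      calc negEig (GMat C z) ≤ negEig (CmMat C s₁) := hs₁
        _ = negEig (CmMat C (s₁ - 1 + 1)) := by rw [hs']
        _ ≤ κ := h1' (s₁ - 1)
    constructor
    · intro m z hz
      have hz' : ∀ i, ‖z i‖ < R := fun i => hz i
      rw [kernelMatrix_eq hK z hz']
      exact hbnd m z hz'
    · have hCs : negEig (CmMat C (N + 1)) = κ := by
        rw [← hCm N]
        exact hN N (le_refl N)
      obtain ⟨t, htz, htle⟩ := (EV_lemma hherm hconv hR (Nat.succ_pos N)).exists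
      refine ⟨N + 1, zpts (N+1) t, (fun i => htz i), ?_⟩
      rw [kernelMatrix_eq hK (zpts (N+1) t) htz]
      refine le_antisymm (hbnd (N+1) (zpts (N+1) t) htz) ?_
      rw [← hCs]
      exact htle
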